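/- For every partition π = (π_1,...,π_ℓ) of m ≥ 2 and every integer c ≥ 0 with c ≥ ℓ - 1 and c ≡ ℓ - 1 (mod 2), there exists a connected loop-less quiver Q with m vertices and n = m + c - 1 arrows whose vertex permutation ξ⁻_Q has cycle type π. -/

import Mathlib

open Matrix Polynomial

/-- Incidence matrix of a quiver with vertex set `Fin m`, arrow set `Fin n`,
source map `s` and target map `t`: the column of arrow `i` is `e_{s i} - e_{t i}`. -/
def incMatrix {m n : ℕ} (s t : Fin n → Fin m) : Matrix (Fin m) (Fin n) ℤ :=
  Matrix.of fun v i => (if v = s i then (1 : ℤ) else 0) - (if v = t i then (1 : ℤ) else 0)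

/-- Connectedness of the underlying multigraph of the quiver `(s, t)`. -/
def QuiverConnected {m n : ℕ} (s t : Fin n → Fin m) : Prop :=
  ∀ v w : Fin m,
    Relation.ReflTransGen (fun a b => ∃ i : Fin n, (s i = a ∧ t i = b) ∨ (s i = b ∧ t i = a)) v w

/-- The endpoint of arrow `i` other than `v` (for a loop-less quiver). -/
def otherEnd {m n : ℕ} (s t : Fin n → Fin m) (i : Fin n) (v : Fin m) : Fin m :=
  if s i = v then t i else s i

/-- Iterate the minimally decreasing walk starting at `v`, using only arrows with
index `< b`, always crossing the maximal available arrow. Returns the final vertex. -/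
def xiAux {m n : ℕ} (s t : Fin n → Fin m) (b : ℕ) (v : Fin m) : Fin m :=
  if h : (Finset.univ.filter (fun i : Fin n => (s i = v ∨ t i = v) ∧ i.val < b)).Nonempty then
    xiAux s t
      ((Finset.univ.filter (fun i : Fin n => (s i = v ∨ t i = v) ∧ i.val < b)).max' h).val
      (otherEnd s t
        ((Finset.univ.filter (fun i : Fin n => (s i = v ∨ t i = v) ∧ i.val < b)).max' h) v)
  else v
termination_by b
decreasing_by
  exact (Finset.mem_filter.mp (Finset.max'_mem _ h)).2.2

/-- The permutation of vertices `ξ⁻` determined by structural minimally decreasing walks: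
`xiDown s t v` is the end vertex of the structural decreasing walk starting at `v`. -/
def xiDown {m n : ℕ} (s t : Fin n → Fin m) (v : Fin m) : Fin m :=
  xiAux s t n v

/-- Iterate the minimally increasing walk starting at `v`, using only arrows with
index `≥ b`, always crossing the minimal available arrow. Returns the final vertex. -/
def xiAuxUp {m n : ℕ} (s t : Fin n → Fin m) (b : ℕ) (v : Fin m) : Fin m :=
  if h : (Finset.univ.filter (fun i : Fin n => (s i = v ∨ t i = v) ∧ b ≤ i.val)).Nonempty then
    xiAuxUp s t
      (((Finset.univ.filter (fun i : Fin n => (s i = v ∨ t i = v) ∧ b ≤ i.val)).min' h).val + 1)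
      (otherEnd s t
        ((Finset.univ.filter (fun i : Fin n => (s i = v ∨ t i = v) ∧ b ≤ i.val)).min' h) v)
  else v
termination_by n - b
decreasing_by
  have h1 := (Finset.mem_filter.mp (Finset.min'_mem _ h)).2.2
  have h2 := ((Finset.univ.filter (fun i : Fin n => (s i = v ∨ t i = v) ∧ b ≤ i.val)).min' h).isLt
  omega

/-- The map `ξ⁺`: end vertex of the structural minimally increasing walk starting at `v`. -/
def xiUp {m n : ℕ} (s t : Fin n → Fin m) (v : Fin m) : Fin m :=
  xiAuxUp s t 0 v


/-- Source vertex of a walk-step `(i, ε)`: `s i` if traversed positively, else `t i`. -/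
def stepSrc {m n : ℕ} (s t : Fin n → Fin m) (p : Fin n × Bool) : Fin m :=
  if p.2 then s p.1 else t p.1

/-- Target vertex of a walk-step `(i, ε)`. -/
def stepTgt {m n : ℕ} (s t : Fin n → Fin m) (p : Fin n × Bool) : Fin m :=
  if p.2 then t p.1 else s p.1


theorem xiAux_zero {m n : ℕ} (s t : Fin n → Fin m) (v : Fin m) : xiAux s t 0 v = v := by
  rw [xiAux]
  have : (Finset.univ.filter (fun i : Fin n => (s i = v ∨ t i = v) ∧ i.val < 0)) = ∅ := by
    simp
  rw [dif_neg]
  rw [this]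
  simp

theorem otherEnd_eq_swap {m n : ℕ} (s t : Fin n → Fin m) (i : Fin n) (v : Fin m)
    (hInc : s i = v ∨ t i = v) : otherEnd s t i v = Equiv.swap (s i) (t i) v := by
  unfold otherEnd
  by_cases h1 : s i = v
  · rw [if_pos h1, ← h1, Equiv.swap_apply_left]
  · rw [if_neg h1]
    have h2 : t i = v := hInc.resolve_left h1
    rw [← h2, Equiv.swap_apply_right]

theorem xiAux_succ {m n : ℕ} (s t : Fin n → Fin m) (b : ℕ) (hb : b < n) (v : Fin m) :
    xiAux s t (b + 1) v = xiAux s t b (Equiv.swap (s ⟨b, hb⟩) (t ⟨b, hb⟩) v) := by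
  set i0 : Fin n := ⟨b, hb⟩ with hi0
  by_cases hInc : s i0 = v ∨ t i0 = v
  · have hmem : i0 ∈ Finset.univ.filter (fun i : Fin n => (s i = v ∨ t i = v) ∧ i.val < b + 1) :=
      Finset.mem_filter.mpr ⟨Finset.mem_univ _, hInc, Nat.lt_succ_self b⟩
    have hne : (Finset.univ.filter (fun i : Fin n => (s i = v ∨ t i = v) ∧ i.val < b + 1)).Nonempty :=
      ⟨i0, hmem⟩
    have hmax : (Finset.univ.filter (fun i : Fin n => (s i = v ∨ t i = v) ∧ i.val < b + 1)).max' hne = i0 := by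
      refine le_antisymm (Finset.max'_le _ _ _ fun y hy => ?_) (Finset.le_max' _ _ hmem)
      have := (Finset.mem_filter.mp hy).2.2
      exact Fin.le_def.mpr (by show y.val ≤ b; omega)
    rw [xiAux, dif_pos hne, hmax, ← otherEnd_eq_swap s t i0 v hInc]
  · push_neg at hInc
    have hsw : Equiv.swap (s i0) (t i0) v = v :=
      Equiv.swap_apply_of_ne_of_ne (fun h => hInc.1 h.symm) (fun h => hInc.2 h.symm)
    have hset : (Finset.univ.filter (fun i : Fin n => (s i = v ∨ t i = v) ∧ i.val < b + 1))
        = (Finset.univ.filter (fun i : Fin n => (s i = v ∨ t i = v) ∧ i.val < b)) := by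
      ext i
      simp only [Finset.mem_filter, Finset.mem_univ, true_and]
      constructor
      · rintro ⟨hi, hlt⟩
        refine ⟨hi, ?_⟩
        rcases Nat.lt_succ_iff_lt_or_eq.mp hlt with h | h
        · exact h
        · exfalso
          have : i = i0 := Fin.ext h
          rw [this] at hi
          rcases hi with h' | h'
          · exact hInc.1 h'
          · exact hInc.2 h'
      · rintro ⟨hi, hlt⟩
        exact ⟨hi, Nat.lt_succ_of_lt hlt⟩
    rw [hsw, xiAux, hset]
    conv_rhs => rw [xiAux]

theorem xiAux_eq_prod {m n : ℕ} (s t : Fin n → Fin m) (b : ℕ) (hb : b ≤ n) (v : Fin m) :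
    xiAux s t b v = (((List.ofFn fun i : Fin n => Equiv.swap (s i) (t i))).take b).prod v := by
  induction b generalizing v with
  | zero => simp [xiAux_zero]
  | succ b IH =>
    have hb' : b < n := hb
    rw [xiAux_succ s t b hb', IH (le_of_lt hb')]
    have htake : ((List.ofFn fun i : Fin n => Equiv.swap (s i) (t i))).take (b + 1)
        = ((List.ofFn fun i : Fin n => Equiv.swap (s i) (t i))).take b
          ++ [Equiv.swap (s ⟨b, hb'⟩) (t ⟨b, hb'⟩)] := by
      rw [List.take_succ]
      congr
      rw [List.getElem?_eq_getElem (by simpa using hb')]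
      simp
    rw [htake, List.prod_append, List.prod_singleton, Equiv.Perm.mul_apply]

theorem xiDown_eq_prod {m n : ℕ} (s t : Fin n → Fin m) (v : Fin m) :
    xiDown s t v = ((List.ofFn fun i : Fin n => Equiv.swap (s i) (t i))).prod v := by
  rw [xiDown, xiAux_eq_prod s t n le_rfl, List.take_of_length_le (by simp)]

/-- The natural number `x` viewed in `Fin m` via mod. -/
def fnn (m : ℕ) (hm0 : 0 < m) (x : ℕ) : Fin m := ⟨x % m, Nat.mod_lt x hm0⟩

theorem fnn_val {m : ℕ} (hm0 : 0 < m) {x : ℕ} (hx : x < m) : (fnn m hm0 x).val = x :=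
  Nat.mod_eq_of_lt hx

theorem fnn_inj {m : ℕ} (hm0 : 0 < m) {x y : ℕ} (hx : x < m) (hy : y < m)
    (h : fnn m hm0 x = fnn m hm0 y) : x = y := by
  have := congrArg Fin.val h
  rwa [fnn_val hm0 hx, fnn_val hm0 hy] at this

/-- The list of vertices `a, a+1, ..., a+p-1`. -/
def vertsL : ℕ → ℕ → List ℕ
  | _, 0 => []
  | a, p + 1 => a :: vertsL (a + 1) p

/-- Chain edges `(a,a+1),...,(a+p-2,a+p-1)`. -/
def chainE : ℕ → ℕ → List (ℕ × ℕ)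
  | _, 0 => []
  | _, 1 => []
  | a, p + 2 => (a, a + 1) :: chainE (a + 1) (p + 1)

/-- Quiver edges for a list of blocks, with duplicated connector edges between
consecutive blocks. -/
def quivE : ℕ → List ℕ → List (ℕ × ℕ)
  | _, [] => []
  | a, [p] => chainE a p
  | a, p :: q :: L =>
      chainE a p ++ (a + p - 1, a + p) :: (a + p - 1, a + p) :: quivE (a + p) (q :: L)

/-- Product of swaps attached to an edge list. -/
def swl {m : ℕ} (hm0 : 0 < m) (E : List (ℕ × ℕ)) : Equiv.Perm (Fin m) :=
  (E.map fun e => Equiv.swap (fnn m hm0 e.1) (fnn m hm0 e.2)).prod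

theorem mem_vertsL {p : ℕ} : ∀ {a x : ℕ}, x ∈ vertsL a p ↔ a ≤ x ∧ x < a + p := by
  induction p with
  | zero => intro a x; simp [vertsL]
  | succ p IH =>
    intro a x
    rw [vertsL, List.mem_cons, IH]
    omega

theorem length_vertsL {p : ℕ} : ∀ {a : ℕ}, (vertsL a p).length = p := by
  induction p with
  | zero => intro a; rfl
  | succ p IH => intro a; rw [vertsL, List.length_cons, IH]

theorem nodup_vertsL {p : ℕ} : ∀ {a : ℕ}, (vertsL a p).Nodup := by
  induction p with
  | zero => intro a; simp [vertsL]
  | succ p IH =>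
    intro a
    rw [vertsL, List.nodup_cons]
    exact ⟨fun h => by have := (mem_vertsL.mp h).1; omega, IH⟩

theorem mem_chainE {p : ℕ} : ∀ {a : ℕ} {e : ℕ × ℕ},
    e ∈ chainE a p ↔ ∃ k, a ≤ k ∧ k + 1 < a + p ∧ e = (k, k + 1) := by
  induction p with
  | zero => intro a e; simp [chainE]; omega
  | succ p IH =>
    intro a e
    match p with
    | 0 => simp [chainE]; omega
    | p + 1 =>
      rw [chainE, List.mem_cons, IH]
      constructor
      · rintro (rfl | ⟨k, hk1, hk2, rfl⟩)
        · exact ⟨a, le_rfl, by omega, rfl⟩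
        · exact ⟨k, by omega, by omega, rfl⟩
      · rintro ⟨k, hk1, hk2, rfl⟩
        rcases Nat.eq_or_lt_of_le hk1 with rfl | h
        · exact Or.inl rfl
        · exact Or.inr ⟨k, by omega, by omega, rfl⟩

theorem swl_chainE {m : ℕ} (hm0 : 0 < m) {p : ℕ} : ∀ {a : ℕ},
    swl hm0 (chainE a p) = ((vertsL a p).map (fnn m hm0)).formPerm := by
  induction p with
  | zero => intro a; simp [chainE, vertsL, swl]
  | succ p IH =>
    intro a
    match p with
    | 0 => simp [chainE, vertsL, swl]
    | p + 1 =>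
      rw [chainE, vertsL, vertsL, List.map_cons, List.map_cons]
      rw [List.formPerm_cons_cons]
      rw [swl, List.map_cons, List.prod_cons]
      congr 1
      have := IH (a := a + 1)
      rw [swl] at this
      rw [this, vertsL, List.map_cons]

theorem swl_move {m : ℕ} (hm0 : 0 < m) {E : List (ℕ × ℕ)} {v : Fin m}
    (h : swl hm0 E v ≠ v) : ∃ e ∈ E, v = fnn m hm0 e.1 ∨ v = fnn m hm0 e.2 := by
  induction E with
  | nil => simp [swl] at h
  | cons e E IH =>
    rw [swl, List.map_cons, List.prod_cons] at h
    by_cases hE : swl hm0 E v = v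
    · rw [Equiv.Perm.mul_apply] at h
      rw [swl] at hE
      rw [hE] at h
      rcases Equiv.eq_or_eq_of_swap_apply_ne_self h with h' | h'
      · exact ⟨e, List.mem_cons_self, Or.inl h'⟩
      · exact ⟨e, List.mem_cons_self, Or.inr h'⟩
    · obtain ⟨e', he', h'⟩ := IH hE
      exact ⟨e', List.mem_cons_of_mem _ he', h'⟩

theorem swl_fixed {m : ℕ} (hm0 : 0 < m) {E : List (ℕ × ℕ)} {v : Fin m}
    (h : ∀ e ∈ E, v ≠ fnn m hm0 e.1 ∧ v ≠ fnn m hm0 e.2) : swl hm0 E v = v := by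
  by_contra hc
  obtain ⟨e, he, h'⟩ := swl_move hm0 hc
  rcases h' with h' | h'
  · exact (h e he).1 h'
  · exact (h e he).2 h'

/-- cycleType of the cycle on a block. -/
theorem cycleType_block {m : ℕ} (hm0 : 0 < m) {a p : ℕ} (hap : a + p ≤ m) :
    (swl hm0 (chainE a p)).cycleType = if 2 ≤ p then {p} else 0 := by
  rw [swl_chainE]
  set l : List (Fin m) := (vertsL a p).map (fnn m hm0) with hl
  have hnod : l.Nodup := by
    refine List.Nodup.map_on ?_ nodup_vertsL
    intro x hx y hy hxy
    have hx' := mem_vertsL.mp hx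
    have hy' := mem_vertsL.mp hy
    exact fnn_inj hm0 (by omega) (by omega) hxy
  have hlen : l.length = p := by rw [hl, List.length_map, length_vertsL]
  by_cases hp : 2 ≤ p
  · rw [if_pos hp]
    have hcyc : l.formPerm.IsCycle := List.isCycle_formPerm hnod (by omega)
    rw [hcyc.cycleType]
    have hsupp : l.formPerm.support = l.toFinset := by
      refine List.support_formPerm_of_nodup l hnod ?_
      intro x hx
      have := congrArg List.length hx
      rw [hlen] at this
      simp at this
      omega
    rw [hsupp, List.toFinset_card_of_nodup hnod, hlen]
  · rw [if_neg hp]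
    interval_cases p
    · rw [hl]
      simp [vertsL]
    · rw [hl]
      simp [vertsL]

theorem mem_quivE_bounds {L : List ℕ} (hL : ∀ p ∈ L, 0 < p) : ∀ {a : ℕ} {e : ℕ × ℕ},
    e ∈ quivE a L → a ≤ e.1 ∧ a ≤ e.2 ∧ e.1 < a + L.sum ∧ e.2 < a + L.sum ∧ e.1 ≠ e.2 := by
  induction L with
  | nil => intro a e he; simp [quivE] at he
  | cons p M IH =>
    intro a e he
    have hp : 0 < p := hL p (List.mem_cons_self)
    match M with
    | [] =>
      rw [quivE] at he
      obtain ⟨k, hk1, hk2, rfl⟩ := mem_chainE.mp he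
      simp only [List.sum_cons, List.sum_nil]
      omega
    | q :: M' =>
      rw [quivE, List.mem_append, List.mem_cons, List.mem_cons] at he
      have hsum : 0 < (q :: M').sum := by
        have := hL q (by simp)
        have := List.single_le_sum (fun x hx => Nat.zero_le x) q (show q ∈ q :: M' from List.mem_cons_self)
        omega
      rw [List.sum_cons] at hsum
      rcases he with hc | rfl | rfl | hrec
      · obtain ⟨k, hk1, hk2, rfl⟩ := mem_chainE.mp hc
        simp only [List.sum_cons]
        omega
      · simp only [List.sum_cons]; omega
      · simp only [List.sum_cons]; omega
      · have := IH (fun x hx => hL x (List.mem_cons_of_mem _ hx)) hrec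
        simp only [List.sum_cons] at this ⊢
        omega

theorem length_chainE {p : ℕ} : ∀ {a : ℕ}, (chainE a p).length + 1 = max p 1 := by
  induction p with
  | zero => intro a; rfl
  | succ p IH =>
    intro a
    match p with
    | 0 => rfl
    | p + 1 =>
      rw [chainE, List.length_cons]
      have := IH (a := a + 1)
      omega

theorem length_quivE {L : List ℕ} (hL : ∀ p ∈ L, 0 < p) (hne : L ≠ []) :
    ∀ {a : ℕ}, (quivE a L).length + 2 = L.sum + L.length := by
  induction L with
  | nil => exact absurd rfl hne
  | cons p M IH =>
    intro a
    have hp : 0 < p := hL p (List.mem_cons_self)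
    match M with
    | [] =>
      rw [quivE]
      have := length_chainE (p := p) (a := a)
      simp only [List.sum_cons, List.sum_nil, List.length_cons, List.length_nil]
      omega
    | q :: M' =>
      rw [quivE]
      have h1 := length_chainE (p := p) (a := a)
      have h2 := IH (fun x hx => hL x (List.mem_cons_of_mem _ hx)) (by simp) (a := a + p)
      simp only [List.length_append, List.length_cons, List.sum_cons] at h2 ⊢
      omega

theorem mem_quivE_consec {L : List ℕ} (hL : ∀ p ∈ L, 0 < p) :
    ∀ {a k : ℕ}, a ≤ k → k + 1 < a + L.sum → (k, k + 1) ∈ quivE a L := by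
  induction L with
  | nil => intro a k h1 h2; rw [List.sum_nil] at h2; omega
  | cons p M IH =>
    intro a k h1 h2
    have hp : 0 < p := hL p (List.mem_cons_self)
    match M with
    | [] =>
      rw [quivE]
      rw [List.sum_cons, List.sum_nil] at h2
      exact mem_chainE.mpr ⟨k, h1, by omega, rfl⟩
    | q :: M' =>
      rw [quivE, List.mem_append, List.mem_cons]
      rw [List.sum_cons] at h2
      by_cases hk : k + 1 < a + p
      · exact Or.inl (mem_chainE.mpr ⟨k, h1, hk, rfl⟩)
      · by_cases hk2 : k + 1 = a + p
        · refine Or.inr (Or.inl ?_)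
          have : k = a + p - 1 := by omega
          rw [this]
          congr 1
          omega
        · refine Or.inr (Or.inr (List.mem_cons_of_mem _ ?_))
          exact IH (fun x hx => hL x (List.mem_cons_of_mem _ hx)) (by omega) (by omega)

theorem cycleType_quivE {m : ℕ} (hm0 : 0 < m) {L : List ℕ} (hL : ∀ p ∈ L, 0 < p) :
    ∀ {a : ℕ}, a + L.sum ≤ m →
      (swl hm0 (quivE a L)).cycleType = ↑(L.filter fun p => 2 ≤ p) := by
  induction L with
  | nil => intro a _; simp [quivE, swl]
  | cons p M IH =>
    intro a hbound
    have hp : 0 < p := hL p (List.mem_cons_self)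
    match M with
    | [] =>
      rw [quivE]
      rw [List.sum_cons, List.sum_nil] at hbound
      rw [cycleType_block hm0 (by omega)]
      by_cases h2 : 2 ≤ p
      · simp [List.filter_cons, h2]
      · simp [List.filter_cons, h2]
    | q :: M' =>
      have hM : ∀ x ∈ q :: M', 0 < x := fun x hx => hL x (List.mem_cons_of_mem _ hx)
      rw [List.sum_cons] at hbound
      have hsum1 : 0 < (q :: M').sum := by
        have := hM q (List.mem_cons_self)
        have := List.single_le_sum (fun x _ => Nat.zero_le x) q (show q ∈ q :: M' from List.mem_cons_self)
        omega
      have hsplit : swl hm0 (quivE a (p :: q :: M'))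
          = swl hm0 (chainE a p) * swl hm0 (quivE (a + p) (q :: M')) := by
        rw [quivE, swl, List.map_append, List.prod_append, List.map_cons, List.prod_cons,
          List.map_cons, List.prod_cons, Equiv.swap_mul_self_mul]
        rfl
      have hd : (swl hm0 (chainE a p)).Disjoint (swl hm0 (quivE (a + p) (q :: M'))) := by
        intro x
        by_cases hx : x.val < a + p
        · right
          apply swl_fixed
          intro e he
          have hb := mem_quivE_bounds hM he
          have he1 : e.1 < m := by omega
          have he2 : e.2 < m := by omega
          constructor
          · intro hEq
            have := congrArg Fin.val hEq
            rw [fnn_val hm0 he1] at this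
            omega
          · intro hEq
            have := congrArg Fin.val hEq
            rw [fnn_val hm0 he2] at this
            omega
        · left
          rw [swl_chainE]
          apply List.formPerm_apply_of_notMem
          intro hx'
          obtain ⟨y, hy, hyx⟩ := List.mem_map.mp hx'
          have hy' := mem_vertsL.mp hy
          have := congrArg Fin.val hyx
          rw [fnn_val hm0 (by omega)] at this
          omega
      rw [hsplit, hd.cycleType_mul, cycleType_block hm0 (by omega),
        IH hM (by omega)]
      by_cases h2 : 2 ≤ p
      · simp [List.filter_cons, h2]
      · simp [List.filter_cons, h2]

theorem connected_of_list {m n : ℕ} (hm0 : 0 < m) (E : List (ℕ × ℕ)) (hE : E.length = n)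
    (hcons : ∀ k, k + 1 < m → (k, k + 1) ∈ E) :
    QuiverConnected (fun i : Fin n => fnn m hm0 (E.get (Fin.cast hE.symm i)).1)
      (fun i : Fin n => fnn m hm0 (E.get (Fin.cast hE.symm i)).2) := by
  intro v w
  have key : ∀ (R : Fin m → Fin m → Prop), Symmetric R →
      (∀ (k : ℕ) (hk : k + 1 < m), R ⟨k, by omega⟩ ⟨k + 1, hk⟩) →
      Relation.ReflTransGen R v w := by
    intro R hsymm hstep
    have hchain : ∀ (k : ℕ) (hk : k < m), Relation.ReflTransGen R ⟨0, hm0⟩ ⟨k, hk⟩ := by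
      intro k
      induction k with
      | zero => intro hk; exact Relation.ReflTransGen.refl
      | succ k IH => intro hk; exact (IH (by omega)).tail (hstep k hk)
    have h1 : Relation.ReflTransGen R ⟨0, hm0⟩ v := by
      have := hchain v.val v.isLt; simpa using this
    have h2 : Relation.ReflTransGen R ⟨0, hm0⟩ w := by
      have := hchain w.val w.isLt; simpa using this
    haveI : Std.Symm R := ⟨fun a b h => hsymm h⟩
    exact (Std.Symm.symm _ _ h1).trans h2
  apply key
  · rintro x y ⟨i, h | h⟩
    exacts [⟨i, Or.inr h⟩, ⟨i, Or.inl h⟩]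
  · intro k hk
    obtain ⟨j, hj⟩ := List.mem_iff_get.mp (hcons k hk)
    refine ⟨Fin.cast hE j, Or.inl ⟨?_, ?_⟩⟩
    · show fnn m hm0 (E.get (Fin.cast hE.symm (Fin.cast hE j))).1 = ⟨k, by omega⟩
      have hc : Fin.cast hE.symm (Fin.cast hE j) = j := by ext; simp
      rw [hc, hj]
      exact Fin.ext (fnn_val hm0 (by omega))
    · show fnn m hm0 (E.get (Fin.cast hE.symm (Fin.cast hE j))).2 = ⟨k + 1, hk⟩
      have hc : Fin.cast hE.symm (Fin.cast hE j) = j := by ext; simp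
      rw [hc, hj]
      exact Fin.ext (fnn_val hm0 hk)
/-- for every partition `π` of `m ≥ 2` with `ℓ` parts, and every `c ≥ 0`
with `ℓ - 1 ≤ c` and `c ≡ ℓ - 1 (mod 2)`, there is a connected loop-less quiver with `m`
vertices and `n = m + c - 1` arrows whose permutation `ξ⁻` has cycle type `π`. -/

theorem exists_quiver_with_cycleType (m : ℕ) (hm : 2 ≤ m) (π : Nat.Partition m)
    (c : ℕ) (hle : π.parts.card - 1 ≤ c) (hpar : c ≡ π.parts.card - 1 [MOD 2]) :
    ∃ s t : Fin (m + c - 1) → Fin m,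
      (∀ i, s i ≠ t i) ∧ QuiverConnected s t ∧
      ∃ σ : Equiv.Perm (Fin m),
        (∀ v : Fin m, σ v = xiDown s t v) ∧ σ.partition.parts = π.parts := by
  classical
  have hm0 : 0 < m := by omega
  set ℓ := π.parts.card with hl
  set L : List ℕ := π.parts.toList with hLdef
  have hLpos : ∀ p ∈ L, 0 < p := fun p hp => π.parts_pos (Multiset.mem_toList.mp hp)
  have hsum : L.sum = m := by
    have h1 : (↑L : Multiset ℕ).sum = L.sum := Multiset.sum_coe L
    rw [hLdef, Multiset.coe_toList] at h1
    rw [← h1, π.parts_sum]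
  have hlenL : L.length = ℓ := Multiset.length_toList _
  have hne : L ≠ [] := by
    intro h
    rw [h, List.sum_nil] at hsum
    omega
  have hl1 : 1 ≤ ℓ := by
    rw [← hlenL]
    have : L.length ≠ 0 := fun h => hne (List.length_eq_zero_iff.mp h)
    omega
  have hpar' : c % 2 = (ℓ - 1) % 2 := hpar
  set e2 := (c - (ℓ - 1)) / 2 with he2
  have h2e2 : 2 * e2 = c - (ℓ - 1) := by omega
  set allE : List (ℕ × ℕ) := quivE 0 L ++ List.replicate (2 * e2) (0, 1) with hallE
  have hlenq := length_quivE hLpos hne (a := 0)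
  rw [hsum, hlenL] at hlenq
  have hlenE : allE.length = m + c - 1 := by
    rw [hallE, List.length_append, List.length_replicate]
    omega
  have hEb : ∀ e ∈ allE, e.1 < m ∧ e.2 < m ∧ e.1 ≠ e.2 := by
    intro e he
    rw [hallE, List.mem_append] at he
    rcases he with he | he
    · have h := mem_quivE_bounds hLpos he
      rw [hsum] at h
      omega
    · have h := List.eq_of_mem_replicate he
      subst h
      exact ⟨hm0, by omega, by decide⟩
  set S : Fin (m + c - 1) → Fin m :=
    fun i => fnn m hm0 (allE.get (Fin.cast hlenE.symm i)).1 with hS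
  set T : Fin (m + c - 1) → Fin m :=
    fun i => fnn m hm0 (allE.get (Fin.cast hlenE.symm i)).2 with hT
  have hcons : ∀ k, k + 1 < m → (k, k + 1) ∈ allE := by
    intro k hk
    rw [hallE]
    exact List.mem_append_left _
      (mem_quivE_consec hLpos (Nat.zero_le k) (by omega))
  refine ⟨S, T, ?_, ?_, ?_⟩
  · intro i
    have he : allE.get (Fin.cast hlenE.symm i) ∈ allE := by
      rw [List.get_eq_getElem]
      exact List.getElem_mem _
    obtain ⟨h1, h2, h3⟩ := hEb _ he
    intro hEq
    exact h3 (fnn_inj hm0 h1 h2 hEq)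
  · exact connected_of_list hm0 allE hlenE hcons
  · have hofn : (List.ofFn fun i : Fin (m + c - 1) => Equiv.swap (S i) (T i))
        = allE.map (fun e => Equiv.swap (fnn m hm0 e.1) (fnn m hm0 e.2)) := by
      apply List.ext_getElem
      · simp [hlenE]
      · intro i h1 h2
        simp [hS, hT, List.get_eq_getElem]
    have hsig : ((List.ofFn fun i : Fin (m + c - 1) => Equiv.swap (S i) (T i)).prod)
        = swl hm0 (quivE 0 L) := by
      rw [hofn]
      show swl hm0 allE = _
      rw [hallE, swl, List.map_append, List.prod_append, List.map_replicate,
        List.prod_replicate]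
      have hpow : (Equiv.swap (fnn m hm0 (0, 1).1) (fnn m hm0 (0, 1).2)) ^ (2 * e2)
          = 1 := by
        rw [pow_mul, pow_two, Equiv.swap_mul_self, one_pow]
      rw [hpow, mul_one]
      rfl
    have hcyc : ((List.ofFn fun i : Fin (m + c - 1) => Equiv.swap (S i) (T i)).prod).cycleType
        = ↑(L.filter fun p => 2 ≤ p) := by
      rw [hsig, cycleType_quivE hm0 hLpos (by omega)]
    refine ⟨(List.ofFn fun i : Fin (m + c - 1) => Equiv.swap (S i) (T i)).prod,
      fun v => (xiDown_eq_prod S T v).symm, ?_⟩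
    rw [Equiv.Perm.parts_partition, ← Equiv.Perm.sum_cycleType, hcyc, Fintype.card_fin]
    have hMfilter : (↑(L.filter fun p => 2 ≤ p) : Multiset ℕ)
        = π.parts.filter (fun p => 2 ≤ p) := by
      conv_rhs => rw [← Multiset.coe_toList π.parts]
      rw [Multiset.filter_coe]
    rw [hMfilter]
    have hsplit := Multiset.filter_add_not (fun p => 2 ≤ p) π.parts
    have hones : π.parts.filter (fun p => ¬2 ≤ p)
        = Multiset.replicate (Multiset.card (π.parts.filter (fun p => ¬2 ≤ p))) 1 :=
      Multiset.eq_replicate_card.mpr (fun b hb => by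
        have h1 := π.parts_pos (Multiset.mem_of_mem_filter hb)
        have h2 := (Multiset.mem_filter.mp hb).2
        omega)
    have hsum2 : (π.parts.filter (fun p => 2 ≤ p)).sum
        + (π.parts.filter (fun p => ¬2 ≤ p)).sum = m := by
      rw [← Multiset.sum_add, hsplit, π.parts_sum]
    have hcard : (π.parts.filter (fun p => ¬2 ≤ p)).sum
        = Multiset.card (π.parts.filter (fun p => ¬2 ≤ p)) := by
      conv_lhs => rw [hones]
      rw [Multiset.sum_replicate, smul_eq_mul, mul_one]
    have hfin : m - (π.parts.filter (fun p => 2 ≤ p)).sum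
        = Multiset.card (π.parts.filter (fun p => ¬2 ≤ p)) := by omega
    rw [hfin, ← hones, hsplit]
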